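/- arXiv:0810.1187 — 3 statements merged into one kernel-verified Lean document; each statement's English description precedes it below -/
import Mathlib

section
/- Let W_1, ..., W_K and Y be finitely-valued random variables on a probability space, and fix an index i in {1,...,K}. Assume H(W_S) > 0 for every nonempty subset S of {1,...,K}\{i}. Fix ε > 0 and d ∈ [0,1], and define ε* = min over nonempty subsets S of {1,...,K}\{i} of (1 + ε − d)·H(W_S)/H(W_{{1,...,K}\{i}}). If H(W_{{1,...,K}\{i}} | Y) ≥ (1 − ε*)·H(W_{{1,...,K}\{i}}), then for every nonempty subset S of {1,...,K}\{i}, H(W_S | Y) ≥ (d − ε)·H(W_S). (That is, near-perfect equivocation for the full message set implies equivocation at least d − ε for every subset of messages.) -/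
open MeasureTheory ProbabilityTheory

noncomputable section

/-- Shannon entropy `H(X)` of a finitely-valued random variable `X`. -/
def ent {Ω α : Type*} [MeasurableSpace Ω] [Fintype α] (μ : Measure Ω) (X : Ω → α) : ℝ :=
  ∑ a : α, Real.negMulLog ((μ (X ⁻¹' {a})).toReal)

/-- Conditional entropy `H(X|Y)`. -/
def condEnt {Ω α β : Type*} [MeasurableSpace Ω] [Fintype α] [Fintype β]
    (μ : Measure Ω) (X : Ω → α) (Y : Ω → β) : ℝ :=
  ent μ (fun ω => (X ω, Y ω)) - ent μ Y

/-- Mutual information `I(X;Y) = H(X) - H(X|Y)`. -/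
def mutInfo {Ω α β : Type*} [MeasurableSpace Ω] [Fintype α] [Fintype β]
    (μ : Measure Ω) (X : Ω → α) (Y : Ω → β) : ℝ :=
  ent μ X - condEnt μ X Y

/-- Conditional mutual information `I(X;Y|Z) = H(X|Z) - H(X|(Y,Z))`. -/
def condMutInfo {Ω α β γ : Type*} [MeasurableSpace Ω] [Fintype α] [Fintype β] [Fintype γ]
    (μ : Measure Ω) (X : Ω → α) (Y : Ω → β) (Z : Ω → γ) : ℝ :=
  condEnt μ X Z - condEnt μ X (fun ω => (Y ω, Z ω))

/-- The joint random variable `X_S = (X_k)_{k ∈ S}` of a family of random variables. -/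
def joint {Ω : Type*} {K : ℕ} {α : Fin K → Type*} (X : (k : Fin K) → Ω → α k)
    (S : Finset (Fin K)) : Ω → ((k : S) → α k) :=
  fun ω k => X k ω


/-- Gibbs' inequality via `log x ≤ x - 1`. -/
lemma gibbs_aux {ι : Type*} [Fintype ι] (a c : ι → ℝ) (ha : ∀ i, 0 ≤ a i)
    (hc : ∀ i, 0 ≤ c i) (hsum : ∑ i, c i ≤ ∑ i, a i)
    (hz : ∀ i, c i = 0 → a i = 0) :
    0 ≤ ∑ i, a i * Real.log (a i / c i) := by
  have key : ∀ i, a i - c i ≤ a i * Real.log (a i / c i) := by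
    intro i
    rcases eq_or_lt_of_le (ha i) with h | h
    · rw [← h]; simp only [zero_mul, zero_sub, neg_nonpos]; linarith [hc i]
    · have hcpos : 0 < c i := by
        rcases eq_or_lt_of_le (hc i) with h' | h'
        · exact absurd (hz i h'.symm) (by linarith)
        · exact h'
      have hlog := Real.log_le_sub_one_of_pos (div_pos hcpos h)
      have h1 : Real.log (c i / a i) = - Real.log (a i / c i) := by
        rw [← Real.log_inv, inv_div]
      rw [h1] at hlog
      have h2 : (c i / a i) * a i = c i := div_mul_cancel₀ _ (ne_of_gt h)
      nlinarith [mul_le_mul_of_nonneg_right hlog h.le]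
  calc (0:ℝ) ≤ ∑ i, a i - ∑ i, c i := by linarith
    _ = ∑ i, (a i - c i) := (Finset.sum_sub_distrib _ _).symm
    _ ≤ _ := Finset.sum_le_sum fun i _ => key i

lemma toReal_measure_biUnion {Ω ι : Type*} [MeasurableSpace Ω] (μ : Measure Ω)
    [IsFiniteMeasure μ] (s : Finset ι) (f : ι → Set Ω)
    (hm : ∀ i ∈ s, MeasurableSet (f i)) (hd : (↑s : Set ι).PairwiseDisjoint f) :
    (μ (⋃ i ∈ s, f i)).toReal = ∑ i ∈ s, (μ (f i)).toReal := by
  rw [measure_biUnion_finset hd hm, ENNReal.toReal_sum (fun i _ => measure_ne_top μ _)]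

/-- Data processing inequality, in raw-sum form:
`H(X) - H(X,Y) - H(g∘X) + H(g∘X, Y) ≥ 0`, i.e. `I(g∘X; Y) ≤ I(X; Y)`. -/
lemma mutInfo_comp_le' {Ω 𝒜 ℬ β : Type*} [MeasurableSpace Ω] (μ : Measure Ω)
    [IsProbabilityMeasure μ] [Fintype 𝒜] [Fintype ℬ] [Fintype β] [DecidableEq 𝒜]
    (X : Ω → ℬ) (g : ℬ → 𝒜) (Y : Ω → β)
    (hX : ∀ b : ℬ, MeasurableSet (X ⁻¹' {b}))
    (hY : ∀ y : β, MeasurableSet (Y ⁻¹' {y})) :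
    (∑ b : ℬ, Real.negMulLog ((μ (X ⁻¹' {b})).toReal))
      - (∑ b : ℬ, ∑ y : β, Real.negMulLog ((μ (X ⁻¹' {b} ∩ Y ⁻¹' {y})).toReal))
      - (∑ a : 𝒜, Real.negMulLog ((μ ((g ∘ X) ⁻¹' {a})).toReal))
      + (∑ a : 𝒜, ∑ y : β, Real.negMulLog ((μ ((g ∘ X) ⁻¹' {a} ∩ Y ⁻¹' {y})).toReal)) ≥ 0 := by
  classical
  set p : ℬ → ℝ := fun b => (μ (X ⁻¹' {b})).toReal with hp
  set r : ℬ → β → ℝ := fun b y => (μ (X ⁻¹' {b} ∩ Y ⁻¹' {y})).toReal with hr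
  set pA : 𝒜 → ℝ := fun a => (μ ((g ∘ X) ⁻¹' {a})).toReal with hpA
  set rA : 𝒜 → β → ℝ := fun a y => (μ ((g ∘ X) ⁻¹' {a} ∩ Y ⁻¹' {y})).toReal with hrA
  have hgX : ∀ a : 𝒜, (g ∘ X) ⁻¹' {a} = ⋃ b ∈ Finset.univ.filter (fun b => g b = a), X ⁻¹' {b} := by
    intro a; ext ω
    simp only [Set.mem_preimage, Set.mem_singleton_iff, Function.comp_apply, Set.mem_iUnion,
      Finset.mem_filter, Finset.mem_univ, true_and]
    constructor
    · intro h; exact ⟨X ω, h, rfl⟩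
    · rintro ⟨b, hb, hXb⟩; rw [hXb]; exact hb
  have hgXm : ∀ a : 𝒜, MeasurableSet ((g ∘ X) ⁻¹' {a}) := by
    intro a; rw [hgX a]
    exact MeasurableSet.biUnion (Finset.countable_toSet _) (fun b _ => hX b)
  -- nonnegativity
  have hp0 : ∀ b, 0 ≤ p b := fun b => ENNReal.toReal_nonneg
  have hr0 : ∀ b y, 0 ≤ r b y := fun b y => ENNReal.toReal_nonneg
  have hpA0 : ∀ a, 0 ≤ pA a := fun a => ENNReal.toReal_nonneg
  have hrA0 : ∀ a y, 0 ≤ rA a y := fun a y => ENNReal.toReal_nonneg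
  -- monotonicities
  have hmono : ∀ {s t : Set Ω}, s ⊆ t → (μ s).toReal ≤ (μ t).toReal := by
    intro s t hst
    exact ENNReal.toReal_mono (measure_ne_top μ _) (measure_mono hst)
  have m1 : ∀ b y, r b y ≤ p b := fun b y => hmono Set.inter_subset_left
  have hsub : ∀ b, X ⁻¹' {b} ⊆ (g ∘ X) ⁻¹' {g b} := by
    intro b ω hω
    simp only [Set.mem_preimage, Set.mem_singleton_iff, Function.comp_apply] at hω ⊢
    rw [hω]
  have m2 : ∀ b y, r b y ≤ rA (g b) y := fun b y =>
    hmono (Set.inter_subset_inter_left _ (hsub b))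
  have m3 : ∀ b, p b ≤ pA (g b) := fun b => hmono (hsub b)
  -- marginal over y
  have marg : ∀ (A : Set Ω), MeasurableSet A →
      (μ A).toReal = ∑ y : β, (μ (A ∩ Y ⁻¹' {y})).toReal := by
    intro A hA
    have hu : A = ⋃ y ∈ (Finset.univ : Finset β), A ∩ Y ⁻¹' {y} := by
      ext ω
      simp only [Set.mem_iUnion, Set.mem_inter_iff, Set.mem_preimage, Set.mem_singleton_iff,
        Finset.mem_univ, exists_true_left]
      constructor
      · intro h; exact ⟨Y ω, h, rfl⟩
      · rintro ⟨y, h, _⟩; exact h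
    conv_lhs => rw [hu]
    rw [toReal_measure_biUnion μ _ _ (fun y _ => hA.inter (hY y))]
    intro y _ y' _ hne
    simp only [Function.onFun]
    apply Set.disjoint_left.2
    rintro ω ⟨_, h1⟩ ⟨_, h2⟩
    exact hne (h1.symm.trans h2)
  have s1 : ∀ b, ∑ y : β, r b y = p b := fun b => (marg _ (hX b)).symm
  have s4 : ∀ a, ∑ y : β, rA a y = pA a := fun a => (marg _ (hgXm a)).symm
  have s2 : ∀ a, ∑ b ∈ Finset.univ.filter (fun b => g b = a), p b = pA a := by
    intro a
    have : pA a = (μ (⋃ b ∈ Finset.univ.filter (fun b => g b = a), X ⁻¹' {b})).toReal := by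
      rw [← hgX a]
    rw [this, toReal_measure_biUnion μ _ _ (fun b _ => hX b)]
    intro b _ b' _ hne
    simp only [Function.onFun]
    apply Set.disjoint_left.2
    rintro ω h1 h2
    simp only [Set.mem_preimage, Set.mem_singleton_iff] at h1 h2
    exact hne (h1.symm.trans h2)
  have s3 : ∀ a y, ∑ b ∈ Finset.univ.filter (fun b => g b = a), r b y = rA a y := by
    intro a y
    have hu : rA a y = (μ (⋃ b ∈ Finset.univ.filter (fun b => g b = a),
        X ⁻¹' {b} ∩ Y ⁻¹' {y})).toReal := by
      rw [← Set.iUnion₂_inter, ← hgX a]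
    rw [hu, toReal_measure_biUnion μ _ _ (fun b _ => (hX b).inter (hY y))]
    intro b _ b' _ hne
    simp only [Function.onFun]
    apply Set.disjoint_left.2
    rintro ω ⟨h1, _⟩ ⟨h2, _⟩
    simp only [Set.mem_preimage, Set.mem_singleton_iff] at h1 h2
    exact hne (h1.symm.trans h2)
  -- termwise identity on the support
  have key : ∀ b y, r b y * Real.log (r b y / (p b * rA (g b) y / pA (g b)))
      = r b y * Real.log (r b y) - r b y * Real.log (p b)
        - r b y * Real.log (rA (g b) y) + r b y * Real.log (pA (g b)) := by
    intro b y
    rcases eq_or_lt_of_le (hr0 b y) with h | h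
    · rw [← h]; ring
    · have hpb : 0 < p b := lt_of_lt_of_le h (m1 b y)
      have hrAp : 0 < rA (g b) y := lt_of_lt_of_le h (m2 b y)
      have hpAp : 0 < pA (g b) := lt_of_lt_of_le hpb (m3 b)
      rw [Real.log_div (ne_of_gt h) (by positivity),
        Real.log_div (by positivity) (ne_of_gt hpAp),
        Real.log_mul (ne_of_gt hpb) (ne_of_gt hrAp)]
      ring
  -- Gibbs
  have main : 0 ≤ ∑ b : ℬ, ∑ y : β, r b y * Real.log (r b y / (p b * rA (g b) y / pA (g b))) := by
    have h := gibbs_aux (ι := ℬ × β) (fun q => r q.1 q.2)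
      (fun q => p q.1 * rA (g q.1) q.2 / pA (g q.1))
      (fun q => hr0 q.1 q.2)
      (fun q => by
        have := hp0 q.1; have := hrA0 (g q.1) q.2; have := hpA0 (g q.1); positivity)
      ?_ ?_
    · rw [Fintype.sum_prod_type] at h
      exact h
    · rw [Fintype.sum_prod_type, Fintype.sum_prod_type]
      apply le_of_eq
      refine Finset.sum_congr rfl fun b _ => ?_
      have e1 : ∑ y : β, p b * rA (g b) y / pA (g b)
          = p b * pA (g b) / pA (g b) := by
        rw [← s4 (g b), Finset.mul_sum, Finset.sum_div]
      rw [e1, s1 b]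
      rcases eq_or_ne (pA (g b)) 0 with h0 | h0
      · have hpb0 : p b = 0 := le_antisymm (le_of_le_of_eq (m3 b) h0) (hp0 b)
        rw [h0, hpb0]; simp
      · rw [mul_div_assoc, div_self h0, mul_one]
    · rintro ⟨b, y⟩ hc0
      simp only at hc0 ⊢
      rcases eq_or_ne (pA (g b)) 0 with h0 | h0
      · have hpb0 : p b = 0 := le_antisymm (le_of_le_of_eq (m3 b) h0) (hp0 b)
        exact le_antisymm (le_of_le_of_eq (m1 b y) hpb0) (hr0 b y)
      · have hnum : p b * rA (g b) y = 0 := by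
          rcases div_eq_zero_iff.1 hc0 with h | h
          · exact h
          · exact absurd h h0
        rcases mul_eq_zero.1 hnum with h | h
        · exact le_antisymm (le_of_le_of_eq (m1 b y) h) (hr0 b y)
        · exact le_antisymm (le_of_le_of_eq (m2 b y) h) (hr0 b y)
  -- regrouped sums
  have hS2 : ∑ b : ℬ, ∑ y : β, r b y * Real.log (p b) = ∑ b : ℬ, p b * Real.log (p b) := by
    refine Finset.sum_congr rfl fun b _ => ?_
    rw [← Finset.sum_mul, s1 b]
  have hS4 : ∑ b : ℬ, ∑ y : β, r b y * Real.log (pA (g b))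
      = ∑ a : 𝒜, pA a * Real.log (pA a) := by
    have e : ∀ b, ∑ y : β, r b y * Real.log (pA (g b)) = p b * Real.log (pA (g b)) := by
      intro b; rw [← Finset.sum_mul, s1 b]
    rw [Finset.sum_congr rfl fun b _ => e b,
      ← Finset.sum_fiberwise Finset.univ g (fun b => p b * Real.log (pA (g b)))]
    refine Finset.sum_congr rfl fun a _ => ?_
    have e2 : ∀ b ∈ Finset.univ.filter (fun b => g b = a),
        p b * Real.log (pA (g b)) = p b * Real.log (pA a) := by
      intro b hb
      rw [(Finset.mem_filter.1 hb).2]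
    rw [Finset.sum_congr rfl e2, ← Finset.sum_mul, s2 a]
  have hS3 : ∑ b : ℬ, ∑ y : β, r b y * Real.log (rA (g b) y)
      = ∑ a : 𝒜, ∑ y : β, rA a y * Real.log (rA a y) := by
    rw [Finset.sum_comm, Finset.sum_comm (s := Finset.univ) (t := Finset.univ)
      (f := fun a y => rA a y * Real.log (rA a y))]
    refine Finset.sum_congr rfl fun y _ => ?_
    rw [← Finset.sum_fiberwise Finset.univ g (fun b => r b y * Real.log (rA (g b) y))]
    refine Finset.sum_congr rfl fun a _ => ?_
    have e2 : ∀ b ∈ Finset.univ.filter (fun b => g b = a),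
        r b y * Real.log (rA (g b) y) = r b y * Real.log (rA a y) := by
      intro b hb
      rw [(Finset.mem_filter.1 hb).2]
    rw [Finset.sum_congr rfl e2, ← Finset.sum_mul, s3 a y]
  -- put it together
  have hφψ : ∑ b : ℬ, ∑ y : β, r b y * Real.log (r b y / (p b * rA (g b) y / pA (g b)))
      = (∑ b : ℬ, ∑ y : β, r b y * Real.log (r b y))
        - (∑ b : ℬ, ∑ y : β, r b y * Real.log (p b))
        - (∑ b : ℬ, ∑ y : β, r b y * Real.log (rA (g b) y))
        + (∑ b : ℬ, ∑ y : β, r b y * Real.log (pA (g b))) := by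
    rw [Finset.sum_congr rfl fun b _ => Finset.sum_congr rfl fun y _ => key b y]
    simp only [Finset.sum_add_distrib, Finset.sum_sub_distrib]
  have eTX : (∑ b : ℬ, Real.negMulLog (p b)) = -(∑ b : ℬ, p b * Real.log (p b)) := by
    simp [Real.negMulLog]
  have eTA : (∑ a : 𝒜, Real.negMulLog (pA a)) = -(∑ a : 𝒜, pA a * Real.log (pA a)) := by
    simp [Real.negMulLog]
  have eTXY : (∑ b : ℬ, ∑ y : β, Real.negMulLog (r b y))
      = -(∑ b : ℬ, ∑ y : β, r b y * Real.log (r b y)) := by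
    simp [Real.negMulLog]
  have eTAY : (∑ a : 𝒜, ∑ y : β, Real.negMulLog (rA a y))
      = -(∑ a : 𝒜, ∑ y : β, rA a y * Real.log (rA a y)) := by
    simp [Real.negMulLog]
  rw [ge_iff_le, eTX, eTA, eTXY, eTAY]
  rw [hφψ, hS2, hS3, hS4] at main
  linarith

lemma entPair_eq {Ω ℬ β : Type*} [MeasurableSpace Ω] [Fintype ℬ] [Fintype β]
    (μ : Measure Ω) (X : Ω → ℬ) (Y : Ω → β) :
    ent μ (fun ω => (X ω, Y ω))
      = ∑ b : ℬ, ∑ y : β, Real.negMulLog ((μ (X ⁻¹' {b} ∩ Y ⁻¹' {y})).toReal) := by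
  rw [ent, Fintype.sum_prod_type]
  refine Finset.sum_congr rfl fun b _ => Finset.sum_congr rfl fun y _ => ?_
  have : (fun ω => (X ω, Y ω)) ⁻¹' {(b, y)} = X ⁻¹' {b} ∩ Y ⁻¹' {y} := by
    ext ω; simp [Prod.ext_iff]
  rw [this]

/-- Data processing for `joint`: for `S ⊆ T`, `I(W_S; Y) ≤ I(W_T; Y)`. -/
lemma joint_mutInfo_mono {Ω : Type*} [MeasurableSpace Ω] (μ : Measure Ω) [IsProbabilityMeasure μ]
    {K : ℕ} {α : Fin K → Type*} [∀ k, Fintype (α k)]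
    [∀ k, MeasurableSpace (α k)] [∀ k, MeasurableSingletonClass (α k)]
    {β : Type*} [Fintype β] [MeasurableSpace β] [MeasurableSingletonClass β]
    (W : (k : Fin K) → Ω → α k) (Y : Ω → β)
    (hW : ∀ k, Measurable (W k)) (hY : Measurable Y)
    (S T : Finset (Fin K)) (hS : S ⊆ T) :
    ent μ (joint W S) - condEnt μ (joint W S) Y
      ≤ ent μ (joint W T) - condEnt μ (joint W T) Y := by
  classical
  set g : ((k : T) → α k) → ((k : S) → α k) := fun f k => f ⟨k.1, hS k.2⟩ with hg
  have hjm : Measurable (joint W T) := measurable_pi_lambda _ fun k => hW k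
  have hgj : g ∘ joint W T = joint W S := rfl
  have h0 := mutInfo_comp_le' μ (joint W T) g Y
    (fun b => hjm (measurableSet_singleton b))
    (fun y => hY (measurableSet_singleton y))
  rw [hgj] at h0
  rw [condEnt, condEnt, entPair_eq, entPair_eq]
  rw [show ent μ (joint W S) = ∑ a, Real.negMulLog ((μ (joint W S ⁻¹' {a})).toReal) from rfl,
    show ent μ (joint W T) = ∑ b, Real.negMulLog ((μ (joint W T ⁻¹' {b})).toReal) from rfl]
  linarith

set_option maxHeartbeats 1000000 in
/-- Lemma 1 of the paper. If the equivocation of the full message set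
`W_{𝒦∖{i}}` at receiver `i` is at least `1 - ε*` (in the form
`H(W_{𝒦∖{i}} | Y) ≥ (1 - ε*) · H(W_{𝒦∖{i}})`), where
`ε* = min_{∅ ≠ S ⊆ 𝒦∖{i}} (1 + ε - d) · H(W_S) / H(W_{𝒦∖{i}})`, then every nonempty subset
`S ⊆ 𝒦∖{i}` of messages has equivocation at least `d - ε`:
`H(W_S | Y) ≥ (d - ε) · H(W_S)`. -/
theorem stmt0 {Ω : Type*} [MeasurableSpace Ω] (μ : Measure Ω) [IsProbabilityMeasure μ]
    {K : ℕ} {α : Fin K → Type*} [∀ k, Fintype (α k)]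
    [∀ k, MeasurableSpace (α k)] [∀ k, MeasurableSingletonClass (α k)]
    {β : Type*} [Fintype β] [MeasurableSpace β] [MeasurableSingletonClass β]
    (W : (k : Fin K) → Ω → α k) (Y : Ω → β) (i : Fin K)
    (hW : ∀ k, Measurable (W k)) (hY : Measurable Y)
    (hpos : ∀ S ⊆ Finset.univ.erase i, S.Nonempty → 0 < ent μ (joint W S))
    (ε d : ℝ) (hε : 0 < ε) (hd0 : 0 ≤ d) (hd1 : d ≤ 1)
    (hne : (((Finset.univ.erase i).powerset).filter (fun S => S.Nonempty)).Nonempty)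
    (hyp : condEnt μ (joint W (Finset.univ.erase i)) Y ≥
      (1 - (((Finset.univ.erase i).powerset).filter (fun S => S.Nonempty)).inf' hne
          (fun S => (1 + ε - d) * ent μ (joint W S) /
            ent μ (joint W (Finset.univ.erase i)))) *
        ent μ (joint W (Finset.univ.erase i))) :
    ∀ S ⊆ Finset.univ.erase i, S.Nonempty →
      condEnt μ (joint W S) Y ≥ (d - ε) * ent μ (joint W S) := by
  classical
  intro S hS hSne
  set T := (Finset.univ : Finset (Fin K)).erase i with hT
  have hTne : T.Nonempty := by
    obtain ⟨S0, hS0⟩ := hne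
    rw [Finset.mem_filter, Finset.mem_powerset] at hS0
    exact hS0.2.mono hS0.1
  have hHT : 0 < ent μ (joint W T) := hpos T (le_refl _) hTne
  have hHS : 0 < ent μ (joint W S) := hpos S hS hSne
  set εstar := ((T.powerset).filter (fun S => S.Nonempty)).inf' hne
    (fun S => (1 + ε - d) * ent μ (joint W S) / ent μ (joint W T)) with hεstar
  have hmem : S ∈ (T.powerset).filter (fun S => S.Nonempty) := by
    rw [Finset.mem_filter, Finset.mem_powerset]
    exact ⟨hS, hSne⟩
  have hle : εstar ≤ (1 + ε - d) * ent μ (joint W S) / ent μ (joint W T) :=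
    Finset.inf'_le _ hmem
  have h1 : ent μ (joint W T) - condEnt μ (joint W T) Y ≤ εstar * ent μ (joint W T) := by
    have e : (1 - εstar) * ent μ (joint W T)
        = ent μ (joint W T) - εstar * ent μ (joint W T) := by ring
    rw [e] at hyp
    linarith
  have h2 : εstar * ent μ (joint W T) ≤ (1 + ε - d) * ent μ (joint W S) := by
    calc εstar * ent μ (joint W T)
        ≤ ((1 + ε - d) * ent μ (joint W S) / ent μ (joint W T)) * ent μ (joint W T) :=
          mul_le_mul_of_nonneg_right hle hHT.le
      _ = (1 + ε - d) * ent μ (joint W S) := div_mul_cancel₀ _ (ne_of_gt hHT)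
  have hdp := joint_mutInfo_mono μ W Y hW hY S T hS
  have e2 : (d - ε) * ent μ (joint W S)
      = ent μ (joint W S) - (1 + ε - d) * ent μ (joint W S) := by ring
  rw [ge_iff_le, e2]
  linarith
end
end

section
/- Let (X_k)_{k∈{1,...,K}} be finitely-valued random variables on a probability space that are mutually independent, let Y be a further finitely-valued random variable, and let M, L, L' be pairwise disjoint subsets of {1,...,K} with M nonempty. Then I(X_M ; Y | X_{L'}) ≤ I(X_M ; Y | X_{L∪L'}). (Conditioning on additional interfering signals, which are independent of X_M, cannot decrease the mutual information with the channel output.) -/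
open MeasureTheory ProbabilityTheory

noncomputable section

/- ### Auxiliary lemmas -/

section Aux

open Real Finset

lemma pointwise_log_bd {p q1 q2 r : ℝ} (hp : 0 ≤ p) (hq1 : p ≤ q1) (hq2 : p ≤ q2)
    (hr : p ≤ r) (hq1' : 0 ≤ q1) (hq2' : 0 ≤ q2) (hr' : 0 ≤ r) :
    p * (Real.log q1 + Real.log q2 - Real.log p - Real.log r) ≤ q1 * q2 / r - p := by
  rcases eq_or_lt_of_le hp with h0 | h0
  · simp only [← h0, zero_mul, zero_sub]
    have : 0 ≤ q1 * q2 / r := div_nonneg (mul_nonneg hq1' hq2') hr'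
    linarith
  · have hq1p : 0 < q1 := lt_of_lt_of_le h0 hq1
    have hq2p : 0 < q2 := lt_of_lt_of_le h0 hq2
    have hrp : 0 < r := lt_of_lt_of_le h0 hr
    have hx : (0:ℝ) < q1 * q2 / (p * r) := by positivity
    have hlog := Real.log_le_sub_one_of_pos hx
    have hxeq : Real.log (q1 * q2 / (p * r)) =
        Real.log q1 + Real.log q2 - Real.log p - Real.log r := by
      rw [Real.log_div (by positivity) (by positivity), Real.log_mul hq1p.ne' hq2p.ne',
        Real.log_mul h0.ne' hrp.ne']
      ring
    rw [← hxeq]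
    have heq : p * (q1 * q2 / (p * r) - 1) = q1 * q2 / r - p := by
      field_simp
    calc p * Real.log (q1 * q2 / (p * r)) ≤ p * (q1 * q2 / (p * r) - 1) :=
          mul_le_mul_of_nonneg_left hlog hp
      _ = q1 * q2 / r - p := heq

lemma sum_rot {α β γ : Type*} [Fintype α] [Fintype β] [Fintype γ] (f : α → β → γ → ℝ) :
    ∑ a, ∑ b, ∑ c, f a b c = ∑ c, ∑ a, ∑ b, f a b c := by
  have h : ∀ a : α, ∑ b, ∑ c, f a b c = ∑ c, ∑ b, f a b c := fun a => Finset.sum_comm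
  simp_rw [h]
  exact Finset.sum_comm

lemma gibbs_aux_s4 {α β γ : Type*} [Fintype α] [Fintype β] [Fintype γ]
    (p : α → β → γ → ℝ) (hp : ∀ a b c, 0 ≤ p a b c)
    (h1 : ∑ a, ∑ b, ∑ c, p a b c = 1) :
    (∑ a, ∑ b, ∑ c, Real.negMulLog (p a b c)) + ∑ c, Real.negMulLog (∑ a, ∑ b, p a b c)
      ≤ (∑ a, ∑ c, Real.negMulLog (∑ b, p a b c))
        + (∑ b, ∑ c, Real.negMulLog (∑ a, p a b c)) := by
  set q1 : α → γ → ℝ := fun a c => ∑ b, p a b c with hq1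
  set q2 : β → γ → ℝ := fun b c => ∑ a, p a b c with hq2
  set r : γ → ℝ := fun c => ∑ a, ∑ b, p a b c with hr
  have hq1nn : ∀ a c, 0 ≤ q1 a c := fun a c => Finset.sum_nonneg fun b _ => hp a b c
  have hq2nn : ∀ b c, 0 ≤ q2 b c := fun b c => Finset.sum_nonneg fun a _ => hp a b c
  have hrnn : ∀ c, 0 ≤ r c := fun c => Finset.sum_nonneg fun a _ =>
    Finset.sum_nonneg fun b _ => hp a b c
  have hple1 : ∀ a b c, p a b c ≤ q1 a c := fun a b c =>
    Finset.single_le_sum (fun b _ => hp a b c) (Finset.mem_univ b)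
  have hple2 : ∀ a b c, p a b c ≤ q2 b c := fun a b c =>
    Finset.single_le_sum (fun a _ => hp a b c) (Finset.mem_univ a)
  have hpler : ∀ a b c, p a b c ≤ r c := fun a b c =>
    le_trans (hple1 a b c) (Finset.single_le_sum (fun a _ => hq1nn a c) (Finset.mem_univ a))
  have h1' : ∑ c, r c = 1 := by rw [hr, ← sum_rot]; exact h1
  have er : ∑ c, Real.negMulLog (r c) = -∑ a, ∑ b, ∑ c, p a b c * Real.log (r c) := by
    rw [sum_rot, ← Finset.sum_neg_distrib]
    refine Finset.sum_congr rfl fun c _ => ?_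
    rw [Real.negMulLog, hr]
    simp only [Finset.sum_mul, neg_mul, Finset.sum_neg_distrib]
  have eq1 : ∑ a, ∑ c, Real.negMulLog (q1 a c)
      = -∑ a, ∑ b, ∑ c, p a b c * Real.log (q1 a c) := by
    rw [← Finset.sum_neg_distrib]
    refine Finset.sum_congr rfl fun a _ => ?_
    rw [Finset.sum_comm, ← Finset.sum_neg_distrib]
    refine Finset.sum_congr rfl fun c _ => ?_
    rw [Real.negMulLog, hq1]
    simp only [Finset.sum_mul, neg_mul, Finset.sum_neg_distrib]
  have eq2 : ∑ b, ∑ c, Real.negMulLog (q2 b c)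
      = -∑ a, ∑ b, ∑ c, p a b c * Real.log (q2 b c) := by
    conv_rhs => rw [Finset.sum_comm]
    rw [← Finset.sum_neg_distrib]
    refine Finset.sum_congr rfl fun b _ => ?_
    conv_rhs => rw [Finset.sum_comm]
    rw [← Finset.sum_neg_distrib]
    refine Finset.sum_congr rfl fun c _ => ?_
    rw [Real.negMulLog, hq2]
    simp only [Finset.sum_mul, neg_mul, Finset.sum_neg_distrib]
  have ep : ∑ a, ∑ b, ∑ c, Real.negMulLog (p a b c)
      = -∑ a, ∑ b, ∑ c, p a b c * Real.log (p a b c) := by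
    simp [Real.negMulLog, neg_mul, Finset.sum_neg_distrib]
  have hT : ∑ a, ∑ b, ∑ c, q1 a c * q2 b c / r c ≤ 1 := by
    rw [sum_rot, ← h1']
    refine Finset.sum_le_sum fun c _ => ?_
    have hb : ∑ b, q2 b c = r c := by rw [hr]; exact Finset.sum_comm
    have ha : ∑ a, q1 a c = r c := rfl
    have : ∑ a, ∑ b, q1 a c * q2 b c / r c = r c * r c / r c := by
      simp_rw [div_eq_mul_inv, mul_assoc, ← Finset.mul_sum]
      rw [← Finset.sum_mul, ← Finset.sum_mul, hb, ha]
    rw [this]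
    rcases eq_or_lt_of_le (hrnn c) with h | h
    · rw [← h]; simp
    · rw [mul_div_assoc, div_self h.ne']; simp
  have hS : ∑ a, ∑ b, ∑ c,
      p a b c * (Real.log (q1 a c) + Real.log (q2 b c)
        - Real.log (p a b c) - Real.log (r c)) ≤ 0 := by
    have step : ∑ a, ∑ b, ∑ c,
        p a b c * (Real.log (q1 a c) + Real.log (q2 b c)
          - Real.log (p a b c) - Real.log (r c))
        ≤ ∑ a, ∑ b, ∑ c, (q1 a c * q2 b c / r c - p a b c) := by
      refine Finset.sum_le_sum fun a _ => Finset.sum_le_sum fun b _ =>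
        Finset.sum_le_sum fun c _ => ?_
      exact pointwise_log_bd (hp a b c) (hple1 a b c) (hple2 a b c) (hpler a b c)
        (hq1nn a c) (hq2nn b c) (hrnn c)
    have : ∑ a, ∑ b, ∑ c, (q1 a c * q2 b c / r c - p a b c)
        = (∑ a, ∑ b, ∑ c, q1 a c * q2 b c / r c) - 1 := by
      rw [← h1]
      simp [Finset.sum_sub_distrib]
    linarith
  have expand : ∑ a, ∑ b, ∑ c,
      p a b c * (Real.log (q1 a c) + Real.log (q2 b c)
        - Real.log (p a b c) - Real.log (r c))
      = (∑ a, ∑ b, ∑ c, p a b c * Real.log (q1 a c))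
        + (∑ a, ∑ b, ∑ c, p a b c * Real.log (q2 b c))
        - (∑ a, ∑ b, ∑ c, p a b c * Real.log (p a b c))
        - (∑ a, ∑ b, ∑ c, p a b c * Real.log (r c)) := by
    simp [mul_add, mul_sub, Finset.sum_add_distrib, Finset.sum_sub_distrib]
  rw [er, eq1, eq2, ep]
  linarith

variable {Ω : Type*} [MeasurableSpace Ω]

lemma meas_inter_fiber_sum {β : Type*} [Fintype β] [MeasurableSpace β]
    [MeasurableSingletonClass β] (μ : Measure Ω) [IsFiniteMeasure μ]
    (S : Set Ω) (hS : MeasurableSet S) (V : Ω → β) (hV : Measurable V) :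
    ∑ b : β, (μ (S ∩ V ⁻¹' {b})).toReal = (μ S).toReal := by
  have hU : S = ⋃ b : β, S ∩ V ⁻¹' {b} := by
    ext ω; simp
  have hd : Pairwise (Function.onFun Disjoint fun b : β => S ∩ V ⁻¹' {b}) := by
    intro b b' hbb'
    refine Set.disjoint_left.mpr fun ω h h' => hbb' ?_
    simp only [Set.mem_inter_iff, Set.mem_preimage, Set.mem_singleton_iff] at h h'
    rw [← h.2, ← h'.2]
  have hm : ∀ b : β, MeasurableSet (S ∩ V ⁻¹' {b}) :=
    fun b => hS.inter (hV (measurableSet_singleton b))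
  have hmeq : μ S = ∑ b : β, μ (S ∩ V ⁻¹' {b}) := by
    conv_lhs => rw [hU]
    rw [measure_iUnion hd hm, tsum_fintype]
  rw [hmeq, ENNReal.toReal_sum (fun b _ => measure_ne_top μ _)]

lemma sum_pm_eq_one {β : Type*} [Fintype β] [MeasurableSpace β]
    [MeasurableSingletonClass β] (μ : Measure Ω) [IsProbabilityMeasure μ]
    (V : Ω → β) (hV : Measurable V) :
    ∑ b : β, (μ (V ⁻¹' {b})).toReal = 1 := by
  have := meas_inter_fiber_sum μ Set.univ MeasurableSet.univ V hV
  simpa using this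

lemma ent_comp_inj {α β : Type*} [Fintype α] [Fintype β] (μ : Measure Ω)
    (X : Ω → α) (f : α → β) (hf : Function.Injective f) :
    ent μ (f ∘ X) = ent μ X := by
  unfold ent
  have hpre : ∀ b : β, (f ∘ X) ⁻¹' {b} = X ⁻¹' (f ⁻¹' {b}) := fun b => rfl
  classical
  rw [← Finset.sum_subset (Finset.subset_univ (Finset.univ.image f))]
  · rw [Finset.sum_image (fun a _ a' _ h => hf h)]
    refine Finset.sum_congr rfl fun a _ => ?_
    congr 2
    have : f ⁻¹' {f a} = {a} := by
      ext x; simp [hf.eq_iff]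
    rw [hpre, this]
  · intro b _ hb
    have : (f ∘ X) ⁻¹' {b} = ∅ := by
      rw [hpre]
      have : f ⁻¹' {b} = ∅ := by
        ext a
        simp only [Set.mem_preimage, Set.mem_singleton_iff, Set.mem_empty_iff_false, iff_false]
        intro h
        exact hb (Finset.mem_image.mpr ⟨a, Finset.mem_univ a, h⟩)
      rw [this, Set.preimage_empty]
    rw [this]
    simp

lemma ent_pair_of_indep {α β : Type*} [Fintype α] [Fintype β]
    [MeasurableSpace α] [MeasurableSingletonClass α]
    [MeasurableSpace β] [MeasurableSingletonClass β]
    (μ : Measure Ω) [IsProbabilityMeasure μ]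
    (U : Ω → α) (V : Ω → β) (hU : Measurable U) (hV : Measurable V)
    (h : IndepFun U V μ) :
    ent μ (fun ω => (U ω, V ω)) = ent μ U + ent μ V := by
  unfold ent
  rw [Fintype.sum_prod_type]
  have key : ∀ (a : α) (b : β),
      (μ ((fun ω => (U ω, V ω)) ⁻¹' {(a, b)})).toReal
        = (μ (U ⁻¹' {a})).toReal * (μ (V ⁻¹' {b})).toReal := by
    intro a b
    have hset : (fun ω => (U ω, V ω)) ⁻¹' {(a, b)} = U ⁻¹' {a} ∩ V ⁻¹' {b} := by
      ext ω; simp [Prod.ext_iff]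
    rw [hset, h.measure_inter_preimage_eq_mul _ _ (measurableSet_singleton a)
      (measurableSet_singleton b), ENNReal.toReal_mul]
  simp_rw [key, Real.negMulLog_mul]
  simp only [Finset.sum_add_distrib, ← Finset.sum_mul, ← Finset.mul_sum]
  rw [sum_pm_eq_one μ U hU, sum_pm_eq_one μ V hV]
  ring

/-- Submodularity: `H(A,B,C) + H(C) ≤ H(A,C) + H(B,C)`, i.e. `I(A;B|C) ≥ 0`. -/
lemma ent_submodular {α β γ : Type*} [Fintype α] [Fintype β] [Fintype γ]
    [MeasurableSpace α] [MeasurableSingletonClass α]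
    [MeasurableSpace β] [MeasurableSingletonClass β]
    [MeasurableSpace γ] [MeasurableSingletonClass γ]
    (μ : Measure Ω) [IsProbabilityMeasure μ]
    (A : Ω → α) (B : Ω → β) (C : Ω → γ)
    (hA : Measurable A) (hB : Measurable B) (hC : Measurable C) :
    ent μ (fun ω => (A ω, B ω, C ω)) + ent μ C
      ≤ ent μ (fun ω => (A ω, C ω)) + ent μ (fun ω => (B ω, C ω)) := by
  classical
  set p : α → β → γ → ℝ :=
    fun a b c => (μ (A ⁻¹' {a} ∩ B ⁻¹' {b} ∩ C ⁻¹' {c})).toReal with hpdef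
  have hAm : ∀ a, MeasurableSet (A ⁻¹' {a}) := fun a => hA (measurableSet_singleton a)
  have hBm : ∀ b, MeasurableSet (B ⁻¹' {b}) := fun b => hB (measurableSet_singleton b)
  have hCm : ∀ c, MeasurableSet (C ⁻¹' {c}) := fun c => hC (measurableSet_singleton c)
  have hsum_c : ∀ a b, ∑ c, p a b c = (μ (A ⁻¹' {a} ∩ B ⁻¹' {b})).toReal := fun a b =>
    meas_inter_fiber_sum μ _ ((hAm a).inter (hBm b)) C hC
  have hsum_b : ∀ a c, ∑ b, p a b c = (μ (A ⁻¹' {a} ∩ C ⁻¹' {c})).toReal := by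
    intro a c
    have hsets : ∀ b, A ⁻¹' {a} ∩ B ⁻¹' {b} ∩ C ⁻¹' {c}
        = (A ⁻¹' {a} ∩ C ⁻¹' {c}) ∩ B ⁻¹' {b} := fun b => by
      rw [Set.inter_right_comm]
    simp_rw [hpdef, hsets]
    exact meas_inter_fiber_sum μ _ ((hAm a).inter (hCm c)) B hB
  have hsum_a : ∀ b c, ∑ a, p a b c = (μ (B ⁻¹' {b} ∩ C ⁻¹' {c})).toReal := by
    intro b c
    have hsets : ∀ a, A ⁻¹' {a} ∩ B ⁻¹' {b} ∩ C ⁻¹' {c}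
        = (B ⁻¹' {b} ∩ C ⁻¹' {c}) ∩ A ⁻¹' {a} := fun a => by
      ext ω
      simp only [Set.mem_inter_iff, Set.mem_preimage]
      tauto
    simp_rw [hpdef, hsets]
    exact meas_inter_fiber_sum μ _ ((hBm b).inter (hCm c)) A hA
  have hsum_ab : ∀ c, ∑ a, ∑ b, p a b c = (μ (C ⁻¹' {c})).toReal := by
    intro c
    simp_rw [hsum_b]
    have hsets : ∀ a, A ⁻¹' {a} ∩ C ⁻¹' {c} = C ⁻¹' {c} ∩ A ⁻¹' {a} := fun a =>
      Set.inter_comm _ _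
    simp_rw [hsets]
    exact meas_inter_fiber_sum μ _ (hCm c) A hA
  have h1 : ∑ a, ∑ b, ∑ c, p a b c = 1 := by
    simp_rw [hsum_c]
    have hstep : ∀ a, ∑ b, (μ (A ⁻¹' {a} ∩ B ⁻¹' {b})).toReal = (μ (A ⁻¹' {a})).toReal :=
      fun a => meas_inter_fiber_sum μ _ (hAm a) B hB
    simp_rw [hstep]
    exact sum_pm_eq_one μ A hA
  have key := gibbs_aux_s4 p (fun a b c => ENNReal.toReal_nonneg) h1
  have e3 : ent μ (fun ω => (A ω, B ω, C ω)) = ∑ a, ∑ b, ∑ c, Real.negMulLog (p a b c) := by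
    unfold ent
    rw [Fintype.sum_prod_type]
    refine Finset.sum_congr rfl fun a _ => ?_
    rw [Fintype.sum_prod_type]
    refine Finset.sum_congr rfl fun b _ => Finset.sum_congr rfl fun c _ => ?_
    have hset : (fun ω => (A ω, B ω, C ω)) ⁻¹' {(a, b, c)}
        = A ⁻¹' {a} ∩ B ⁻¹' {b} ∩ C ⁻¹' {c} := by
      ext ω
      simp only [Set.mem_preimage, Set.mem_singleton_iff, Prod.ext_iff, Set.mem_inter_iff]
      tauto
    rw [hset]
  have eC : ent μ C = ∑ c, Real.negMulLog (∑ a, ∑ b, p a b c) := by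
    unfold ent
    simp_rw [hsum_ab]
  have eAC : ent μ (fun ω => (A ω, C ω)) = ∑ a, ∑ c, Real.negMulLog (∑ b, p a b c) := by
    unfold ent
    rw [Fintype.sum_prod_type]
    refine Finset.sum_congr rfl fun a _ => Finset.sum_congr rfl fun c _ => ?_
    rw [hsum_b]
    have hset : (fun ω => (A ω, C ω)) ⁻¹' {(a, c)} = A ⁻¹' {a} ∩ C ⁻¹' {c} := by
      ext ω
      simp [Prod.ext_iff]
    rw [hset]
  have eBC : ent μ (fun ω => (B ω, C ω)) = ∑ b, ∑ c, Real.negMulLog (∑ a, p a b c) := by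
    unfold ent
    rw [Fintype.sum_prod_type]
    refine Finset.sum_congr rfl fun b _ => Finset.sum_congr rfl fun c _ => ?_
    rw [hsum_a]
    have hset : (fun ω => (B ω, C ω)) ⁻¹' {(b, c)} = B ⁻¹' {b} ∩ C ⁻¹' {c} := by
      ext ω
      simp [Prod.ext_iff]
    rw [hset]
  rw [e3, eC, eAC, eBC]
  exact key

end Aux

/-- generalized Lemma 3. For mutually independent finitely-valued random
variables `(X_k)_{k ∈ {1,…,K}}`, a further finitely-valued random variable `Y`, and pairwise
disjoint index sets `M, L, L' ⊆ {1,…,K}` with `M` nonempty, conditioning on the additional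
independent signals `X_L` cannot decrease mutual information:
`I(X_M ; Y | X_{L'}) ≤ I(X_M ; Y | X_{L ∪ L'})`. -/
theorem stmt4 {Ω : Type*} [MeasurableSpace Ω] (μ : Measure Ω) [IsProbabilityMeasure μ]
    {K : ℕ} {α : Fin K → Type*} [∀ k, Fintype (α k)]
    [mα : ∀ k, MeasurableSpace (α k)] [∀ k, MeasurableSingletonClass (α k)]
    {β : Type*} [Fintype β] [MeasurableSpace β] [MeasurableSingletonClass β]
    (X : (k : Fin K) → Ω → α k) (Y : Ω → β)
    (hX : ∀ k, Measurable (X k)) (hY : Measurable Y)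
    (hind : iIndepFun X μ)
    (M L L' : Finset (Fin K)) (hM : M.Nonempty)
    (hML : Disjoint M L) (hML' : Disjoint M L') (hLL' : Disjoint L L') :
    condMutInfo μ (joint X M) Y (joint X L') ≤
      condMutInfo μ (joint X M) Y (joint X (L ∪ L')) := by
  classical
  have hAmeas : ∀ S : Finset (Fin K), Measurable (joint X S) :=
    fun S => measurable_pi_lambda _ (fun k => hX k)
  have hMW : Disjoint M (L ∪ L') := Finset.disjoint_union_right.mpr ⟨hML, hML'⟩
  -- independence facts
  have hAZ : IndepFun (joint X M) (joint X L') μ := hind.indepFun_finset M L' hML' hX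
  have hAW : IndepFun (joint X M) (joint X (L ∪ L')) μ :=
    hind.indepFun_finset M (L ∪ L') hMW hX
  have E1 : ent μ (fun ω => (joint X M ω, joint X L' ω))
      = ent μ (joint X M) + ent μ (joint X L') :=
    ent_pair_of_indep μ _ _ (hAmeas M) (hAmeas L') hAZ
  have E2 : ent μ (fun ω => (joint X M ω, joint X (L ∪ L') ω))
      = ent μ (joint X M) + ent μ (joint X (L ∪ L')) :=
    ent_pair_of_indep μ _ _ (hAmeas M) (hAmeas (L ∪ L')) hAW
  -- the relabeling bijection from X_{L∪L'} to (X_L, X_{L'})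
  set f : ((k : ↥(L ∪ L')) → α k) → ((k : ↥L) → α k) × ((k : ↥L') → α k) :=
    fun w => (fun k => w ⟨k.1, Finset.mem_union_left _ k.2⟩,
              fun k => w ⟨k.1, Finset.mem_union_right _ k.2⟩) with hfdef
  have hfinj : Function.Injective f := by
    intro w w' h
    funext j
    rcases Finset.mem_union.mp j.2 with h' | h'
    · have h2 := congrFun (congrArg Prod.fst h) ⟨j.1, h'⟩
      have hj : j = ⟨j.1, Finset.mem_union_left _ h'⟩ := Subtype.ext rfl
      rw [hj]
      exact h2
    · have h2 := congrFun (congrArg Prod.snd h) ⟨j.1, h'⟩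
      have hj : j = ⟨j.1, Finset.mem_union_right _ h'⟩ := Subtype.ext rfl
      rw [hj]
      exact h2
  -- relabeling map for (Y, X_{L∪L'}) ↦ (X_L, (Y, X_{L'}))
  set g : β × ((k : ↥(L ∪ L')) → α k) → ((k : ↥L) → α k) × (β × ((k : ↥L') → α k)) :=
    fun yw => ((f yw.2).1, (yw.1, (f yw.2).2)) with hgdef
  have hginj : Function.Injective g := by
    rintro ⟨y, w⟩ ⟨y', w'⟩ h
    simp only [hgdef, Prod.mk.injEq] at h
    obtain ⟨h1, h2, h3⟩ := h
    have hw : w = w' := hfinj (Prod.ext h1 h3)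
    simp [h2, hw]
  have R2 : ent μ (fun ω => (Y ω, joint X (L ∪ L') ω))
      = ent μ (fun ω => (joint X L ω, (Y ω, joint X L' ω))) := by
    rw [← ent_comp_inj μ (fun ω => (Y ω, joint X (L ∪ L') ω)) g hginj]
    rfl
  have R1 : ent μ (fun ω => (joint X M ω, (Y ω, joint X (L ∪ L') ω)))
      = ent μ (fun ω => (joint X M ω, (joint X L ω, (Y ω, joint X L' ω)))) := by
    rw [← ent_comp_inj μ (fun ω => (joint X M ω, (Y ω, joint X (L ∪ L') ω)))
      (Prod.map id g) (Function.injective_id.prodMap hginj)]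
    rfl
  have sub := ent_submodular μ (joint X M) (joint X L)
    (fun ω => (Y ω, joint X L' ω)) (hAmeas M) (hAmeas L) (hY.prodMk (hAmeas L'))
  unfold condMutInfo condEnt
  dsimp only
  linarith [E1, E2, R1, R2, sub]
end
end

section
/- Let X_1, ..., X_K, Z be finitely-valued random variables on a probability space such that the family {X_1, ..., X_K, Z} is mutually independent, and let Y be a further finitely-valued random variable. Assume the following symmetry (exchangeability) condition: for all indices k ≠ i in {1,...,K} and every subset L of {1,...,K}\{k,i}, I(X_k ; Y | X_L, Z) = I(X_i ; Y | X_L, Z). Then for every subset S of {1,...,K} with 0 < |S| < K, letting S^c = {1,...,K}\S, one has (1/|S^c|)·I(X_{S^c} ; Y | Z) ≤ (1/|S|)·I(X_S ; Y | X_{S^c}, Z). -/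
open MeasureTheory ProbabilityTheory

noncomputable section

universe u

/-- Value types of the extended family `{X_1, …, X_K, Z}` (index `none` corresponds to `Z`). -/
def extType {K : ℕ} (α : Fin K → Type u) (ζ : Type u) : Option (Fin K) → Type u
  | none => ζ
  | some k => α k

/-- Measurable-space structures on the extended family `{X_1, …, X_K, Z}`. -/
def extMeas {K : ℕ} {α : Fin K → Type u} {ζ : Type u}
    (mα : ∀ k, MeasurableSpace (α k)) (mζ : MeasurableSpace ζ) :
    (j : Option (Fin K)) → MeasurableSpace (extType α ζ j)
  | none => mζ
  | some k => mα k

/-- The extended family `{X_1, …, X_K, Z}` viewed as a single indexed family of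
random variables. -/
def extFam {Ω : Type*} {K : ℕ} {α : Fin K → Type u} {ζ : Type u}
    (X : (k : Fin K) → Ω → α k) (Z : Ω → ζ) :
    (j : Option (Fin K)) → Ω → extType α ζ j
  | none => Z
  | some k => X k


namespace Stmt5Aux

set_option linter.unusedSectionVars false

open Real Finset

variable {Ω : Type*} [MeasurableSpace Ω] {μ : Measure Ω} [IsProbabilityMeasure μ]
lemma ent_eq_of_comp_inj {α β : Type*} [Fintype α] [Fintype β]
    (V : Ω → β) (W : Ω → α) (e : α → β) (he : Function.Injective e)
    (h : ∀ ω, V ω = e (W ω)) : ent μ V = ent μ W := by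
  classical
  unfold ent
  have key : ∀ a : α, V ⁻¹' {e a} = W ⁻¹' {a} := by
    intro a; ext ω
    simp only [Set.mem_preimage, Set.mem_singleton_iff, h ω, he.eq_iff]
  calc ∑ b : β, Real.negMulLog ((μ (V ⁻¹' {b})).toReal)
      = ∑ b ∈ Finset.univ.image e, Real.negMulLog ((μ (V ⁻¹' {b})).toReal) := by
        refine (Finset.sum_subset (Finset.subset_univ _) ?_).symm
        intro b _ hb
        have hemp : V ⁻¹' {b} = ∅ := by
          ext ω
          simp only [Set.mem_preimage, Set.mem_singleton_iff, Set.mem_empty_iff_false,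
            iff_false]
          intro hV
          exact hb (by rw [← hV, h ω]; exact Finset.mem_image_of_mem e (Finset.mem_univ _))
        simp [hemp]
    _ = ∑ a : α, Real.negMulLog ((μ (V ⁻¹' {e a})).toReal) :=
        Finset.sum_image (fun x _ y _ hxy => he hxy)
    _ = ∑ a : α, Real.negMulLog ((μ (W ⁻¹' {a})).toReal) := by simp_rw [key]

lemma sum_toReal_meas_inter {β : Type*} [Fintype β] [MeasurableSpace β]
    [MeasurableSingletonClass β] (E : Set Ω)
    {W : Ω → β} (hW : Measurable W) :
    ∑ b : β, (μ (E ∩ W ⁻¹' {b})).toReal = (μ E).toReal := by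
  rw [← ENNReal.toReal_sum (fun b _ => measure_ne_top μ _)]
  congr 1
  calc ∑ b : β, μ (E ∩ W ⁻¹' {b})
      = ∑ b : β, μ.restrict E (W ⁻¹' {b}) := by
        refine Finset.sum_congr rfl fun b _ => ?_
        rw [Measure.restrict_apply (hW (measurableSet_singleton b)), Set.inter_comm]
    _ = μ.restrict E (W ⁻¹' ↑(Finset.univ : Finset β)) :=
        sum_measure_preimage_singleton _ (fun y _ => hW (measurableSet_singleton y))
    _ = μ E := by simp

lemma sum_prob_eq_one {β : Type*} [Fintype β] [MeasurableSpace β]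
    [MeasurableSingletonClass β] {W : Ω → β} (hW : Measurable W) :
    ∑ b : β, (μ (W ⁻¹' {b})).toReal = 1 := by
  have := sum_toReal_meas_inter (μ := μ) Set.univ hW
  simpa using this

lemma condMutInfo_eq {α β γ : Type*} [Fintype α] [Fintype β] [Fintype γ]
    (A : Ω → α) (B : Ω → β) (C : Ω → γ) :
    condMutInfo μ A B C =
      ent μ (fun ω => (A ω, C ω)) + ent μ (fun ω => (B ω, C ω))
        - ent μ (fun ω => (A ω, (B ω, C ω))) - ent μ C := by
  simp only [condMutInfo, condEnt]; ring

lemma term_ineq {r s t u : ℝ} (hr : 0 ≤ r) (hrs : r ≤ s) (hrt : r ≤ t) (hsu : s ≤ u) :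
    r - s * t / u ≤
      -(r * Real.log s) - r * Real.log t + r * Real.log r + r * Real.log u := by
  rcases eq_or_lt_of_le hr with h0 | h0
  · have hs : 0 ≤ s := le_trans hr hrs
    have ht : 0 ≤ t := le_trans hr hrt
    have hu : 0 ≤ u := le_trans hs hsu
    rw [← h0]
    have : 0 ≤ s * t / u := by positivity
    simp only [zero_mul, mul_zero, neg_zero, add_zero, zero_sub, zero_add]
    linarith
  · have hs : 0 < s := lt_of_lt_of_le h0 hrs
    have ht : 0 < t := lt_of_lt_of_le h0 hrt
    have hu : 0 < u := lt_of_lt_of_le hs hsu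
    set q := s * t / u with hq
    have hq0 : 0 < q := by positivity
    have hlog : Real.log (q / r) ≤ q / r - 1 := Real.log_le_sub_one_of_pos (by positivity)
    have hld : Real.log (q / r) = Real.log q - Real.log r := Real.log_div hq0.ne' h0.ne'
    have hlq : Real.log q = Real.log s + Real.log t - Real.log u := by
      rw [hq, Real.log_div (by positivity) hu.ne', Real.log_mul hs.ne' ht.ne']
    have h2 : r * (Real.log q - Real.log r) ≤ r * (q / r - 1) :=
      mul_le_mul_of_nonneg_left (by linarith) (le_of_lt h0)
    have h3 : r * (q / r - 1) = q - r := by field_simp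
    have h4 : r * Real.log q = r * Real.log s + r * Real.log t - r * Real.log u := by
      rw [hlq]; ring
    nlinarith [h2, h3, h4]


lemma condMutInfo_nonneg {α β γ : Type*} [Fintype α] [Fintype β] [Fintype γ]
    [MeasurableSpace α] [MeasurableSpace β] [MeasurableSpace γ]
    [MeasurableSingletonClass α] [MeasurableSingletonClass β] [MeasurableSingletonClass γ]
    {A : Ω → α} {B : Ω → β} {C : Ω → γ}
    (hA : Measurable A) (hB : Measurable B) (hC : Measurable C) :
    0 ≤ condMutInfo μ A B C := by
  classical
  set p : α → β → γ → ℝ :=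
    fun a b c => (μ (A ⁻¹' {a} ∩ (B ⁻¹' {b} ∩ C ⁻¹' {c}))).toReal with hp
  set pAC : α → γ → ℝ := fun a c => (μ (A ⁻¹' {a} ∩ C ⁻¹' {c})).toReal with hpAC
  set pBC : β → γ → ℝ := fun b c => (μ (B ⁻¹' {b} ∩ C ⁻¹' {c})).toReal with hpBC
  set pC : γ → ℝ := fun c => (μ (C ⁻¹' {c})).toReal with hpC
  -- marginals
  have m1 : ∀ a c, ∑ b : β, p a b c = pAC a c := by
    intro a c
    have hrw : ∀ b : β, A ⁻¹' {a} ∩ (B ⁻¹' {b} ∩ C ⁻¹' {c})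
        = (A ⁻¹' {a} ∩ C ⁻¹' {c}) ∩ B ⁻¹' {b} := by
      intro b; ext ω; simp only [Set.mem_inter_iff, Set.mem_preimage]; tauto
    simp only [hp, hrw]
    exact sum_toReal_meas_inter _ hB
  have m2 : ∀ b c, ∑ a : α, p a b c = pBC b c := by
    intro b c
    have hrw : ∀ a : α, A ⁻¹' {a} ∩ (B ⁻¹' {b} ∩ C ⁻¹' {c})
        = (B ⁻¹' {b} ∩ C ⁻¹' {c}) ∩ A ⁻¹' {a} := by
      intro a; ext ω; simp only [Set.mem_inter_iff, Set.mem_preimage]; tauto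
    simp only [hp, hrw]
    exact sum_toReal_meas_inter _ hA
  have m3 : ∀ c, ∑ a : α, pAC a c = pC c := by
    intro c
    have hrw : ∀ a : α, A ⁻¹' {a} ∩ C ⁻¹' {c} = C ⁻¹' {c} ∩ A ⁻¹' {a} := by
      intro a; exact Set.inter_comm _ _
    simp only [hpAC, hrw]
    exact sum_toReal_meas_inter _ hA
  have m4 : ∀ c, ∑ b : β, pBC b c = pC c := by
    intro c
    have hrw : ∀ b : β, B ⁻¹' {b} ∩ C ⁻¹' {c} = C ⁻¹' {c} ∩ B ⁻¹' {b} := by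
      intro b; exact Set.inter_comm _ _
    simp only [hpBC, hrw]
    exact sum_toReal_meas_inter _ hB
  have m5 : ∑ c : γ, pC c = 1 := sum_prob_eq_one hC
  -- bounds
  have hp0 : ∀ a b c, 0 ≤ p a b c := fun _ _ _ => ENNReal.toReal_nonneg
  have hps : ∀ a b c, p a b c ≤ pAC a c := fun a b c =>
    ENNReal.toReal_mono (measure_ne_top μ _)
      (measure_mono (fun ω h => ⟨h.1, h.2.2⟩))
  have hpt : ∀ a b c, p a b c ≤ pBC b c := fun a b c =>
    ENNReal.toReal_mono (measure_ne_top μ _)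
      (measure_mono (fun ω h => ⟨h.2.1, h.2.2⟩))
  have hsu : ∀ a c, pAC a c ≤ pC c := fun a c =>
    ENNReal.toReal_mono (measure_ne_top μ _)
      (measure_mono Set.inter_subset_right)
  have hpAC0 : ∀ a c, 0 ≤ pAC a c := fun _ _ => ENNReal.toReal_nonneg
  have hpBC0 : ∀ b c, 0 ≤ pBC b c := fun _ _ => ENNReal.toReal_nonneg
  -- entropy identities
  have eAC : ent μ (fun ω => (A ω, C ω)) = ∑ c : γ, ∑ a : α, Real.negMulLog (pAC a c) := by
    unfold ent
    rw [Fintype.sum_prod_type, Finset.sum_comm]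
    refine Finset.sum_congr rfl fun c _ => Finset.sum_congr rfl fun a _ => ?_
    have : (fun ω => (A ω, C ω)) ⁻¹' {(a, c)} = A ⁻¹' {a} ∩ C ⁻¹' {c} := by
      ext ω; simp [Prod.ext_iff]
    rw [this]
  have eBC : ent μ (fun ω => (B ω, C ω)) = ∑ c : γ, ∑ b : β, Real.negMulLog (pBC b c) := by
    unfold ent
    rw [Fintype.sum_prod_type, Finset.sum_comm]
    refine Finset.sum_congr rfl fun c _ => Finset.sum_congr rfl fun b _ => ?_
    have : (fun ω => (B ω, C ω)) ⁻¹' {(b, c)} = B ⁻¹' {b} ∩ C ⁻¹' {c} := by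
      ext ω; simp [Prod.ext_iff]
    rw [this]
  have eC : ent μ C = ∑ c : γ, Real.negMulLog (pC c) := rfl
  have eABC : ent μ (fun ω => (A ω, (B ω, C ω)))
      = ∑ c : γ, ∑ a : α, ∑ b : β, Real.negMulLog (p a b c) := by
    unfold ent
    rw [Fintype.sum_prod_type]
    have step : ∀ a : α, ∑ x : β × γ,
        Real.negMulLog ((μ ((fun ω => (A ω, (B ω, C ω))) ⁻¹' {(a, x)})).toReal)
        = ∑ c : γ, ∑ b : β, Real.negMulLog (p a b c) := by
      intro a
      rw [Fintype.sum_prod_type, Finset.sum_comm]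
      refine Finset.sum_congr rfl fun c _ => Finset.sum_congr rfl fun b _ => ?_
      have : (fun ω => (A ω, (B ω, C ω))) ⁻¹' {(a, (b, c))}
          = A ⁻¹' {a} ∩ (B ⁻¹' {b} ∩ C ⁻¹' {c}) := by
        ext ω; simp [Prod.ext_iff, Set.mem_inter_iff, and_assoc]
      rw [this]
    rw [Finset.sum_congr rfl fun a _ => step a, Finset.sum_comm]
  -- log-sum identities
  have E1 : ∑ c : γ, ∑ a : α, ∑ b : β, p a b c * Real.log (pAC a c)
      = -ent μ (fun ω => (A ω, C ω)) := by
    rw [eAC, ← Finset.sum_neg_distrib]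
    refine Finset.sum_congr rfl fun c _ => ?_
    rw [← Finset.sum_neg_distrib]
    refine Finset.sum_congr rfl fun a _ => ?_
    rw [← Finset.sum_mul, m1, Real.negMulLog]; ring
  have E2 : ∑ c : γ, ∑ a : α, ∑ b : β, p a b c * Real.log (pBC b c)
      = -ent μ (fun ω => (B ω, C ω)) := by
    rw [eBC, ← Finset.sum_neg_distrib]
    refine Finset.sum_congr rfl fun c _ => ?_
    rw [Finset.sum_comm, ← Finset.sum_neg_distrib]
    refine Finset.sum_congr rfl fun b _ => ?_
    rw [← Finset.sum_mul, m2, Real.negMulLog]; ring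
  have E3 : ∑ c : γ, ∑ a : α, ∑ b : β, p a b c * Real.log (p a b c)
      = -ent μ (fun ω => (A ω, (B ω, C ω))) := by
    rw [eABC, ← Finset.sum_neg_distrib]
    refine Finset.sum_congr rfl fun c _ => ?_
    rw [← Finset.sum_neg_distrib]
    refine Finset.sum_congr rfl fun a _ => ?_
    rw [← Finset.sum_neg_distrib]
    refine Finset.sum_congr rfl fun b _ => ?_
    rw [Real.negMulLog]; ring
  have E4 : ∑ c : γ, ∑ a : α, ∑ b : β, p a b c * Real.log (pC c) = -ent μ C := by
    rw [eC, ← Finset.sum_neg_distrib]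
    refine Finset.sum_congr rfl fun c _ => ?_
    have : ∑ a : α, ∑ b : β, p a b c * Real.log (pC c)
        = (∑ a : α, ∑ b : β, p a b c) * Real.log (pC c) := by
      rw [Finset.sum_mul]
      exact Finset.sum_congr rfl fun a _ => (Finset.sum_mul _ _ _).symm
    rw [this]
    have h2 : ∑ a : α, ∑ b : β, p a b c = pC c := by
      rw [Finset.sum_congr rfl fun a _ => m1 a c, m3]
    rw [h2, Real.negMulLog]; ring
  -- total mass
  have hP : ∑ c : γ, ∑ a : α, ∑ b : β, p a b c = 1 := by
    have : ∀ c : γ, ∑ a : α, ∑ b : β, p a b c = pC c := fun c => by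
      rw [Finset.sum_congr rfl fun a _ => m1 a c, m3]
    rw [Finset.sum_congr rfl fun c _ => this c, m5]
  -- Q bound
  have hqsum : ∀ c, ∑ a : α, ∑ b : β, pAC a c * pBC b c / pC c ≤ pC c := by
    intro c
    by_cases h : pC c = 0
    · have hz : ∀ a, pAC a c = 0 := fun a => le_antisymm (h ▸ hsu a c) (hpAC0 a c)
      have : ∀ a : α, ∑ b : β, pAC a c * pBC b c / pC c = 0 := by
        intro a; simp [hz a]
      rw [Finset.sum_congr rfl fun a _ => this a]
      simp [h]
    · have heq : ∑ a : α, ∑ b : β, pAC a c * pBC b c / pC c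
          = (∑ a : α, pAC a c) * (∑ b : β, pBC b c) / pC c := by
        rw [Finset.sum_mul, Finset.sum_div]
        refine Finset.sum_congr rfl fun a _ => ?_
        rw [Finset.mul_sum, Finset.sum_div]
      rw [heq, m3, m4]
      field_simp
      exact le_refl _
  have hQ : ∑ c : γ, ∑ a : α, ∑ b : β, pAC a c * pBC b c / pC c ≤ 1 :=
    le_trans (Finset.sum_le_sum fun c _ => hqsum c) (le_of_eq m5)
  -- main inequality
  have main : ∑ c : γ, ∑ a : α, ∑ b : β, (p a b c - pAC a c * pBC b c / pC c)
      ≤ ∑ c : γ, ∑ a : α, ∑ b : β,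
        (-(p a b c * Real.log (pAC a c)) - p a b c * Real.log (pBC b c)
          + p a b c * Real.log (p a b c) + p a b c * Real.log (pC c)) := by
    refine Finset.sum_le_sum fun c _ => Finset.sum_le_sum fun a _ =>
      Finset.sum_le_sum fun b _ => ?_
    exact term_ineq (hp0 a b c) (hps a b c) (hpt a b c) (hsu a c)
  rw [condMutInfo_eq A B C]
  simp only [Finset.sum_sub_distrib, Finset.sum_add_distrib, Finset.sum_neg_distrib] at main
  rw [hP, E1, E2, E3, E4] at main
  linarith [main, hQ]


lemma condMutInfo_comm {α β γ : Type*} [Fintype α] [Fintype β] [Fintype γ]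
    (A : Ω → α) (B : Ω → β) (C : Ω → γ) :
    condMutInfo μ A B C = condMutInfo μ B A C := by
  rw [condMutInfo_eq, condMutInfo_eq]
  have h1 : ent μ (fun ω => (A ω, (B ω, C ω))) = ent μ (fun ω => (B ω, (A ω, C ω))) := by
    refine (ent_eq_of_comp_inj (fun ω => (A ω, (B ω, C ω)))
      (fun ω => (B ω, (A ω, C ω))) (fun x => (x.2.1, (x.1, x.2.2))) ?_ (fun ω => rfl))
    exact Function.LeftInverse.injective
      (g := fun x => (x.2.1, (x.1, x.2.2))) (fun x => rfl)
  linarith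

lemma condMutInfo_chain {α α' β γ : Type*} [Fintype α] [Fintype α'] [Fintype β] [Fintype γ]
    (A : Ω → α) (B : Ω → α') (Y : Ω → β) (C : Ω → γ) :
    condMutInfo μ (fun ω => (A ω, B ω)) Y C
      = condMutInfo μ B Y C + condMutInfo μ A Y (fun ω => (B ω, C ω)) := by
  rw [condMutInfo_eq, condMutInfo_eq, condMutInfo_eq]
  have h1 : ent μ (fun ω => ((A ω, B ω), C ω)) = ent μ (fun ω => (A ω, (B ω, C ω))) := by
    refine ent_eq_of_comp_inj _ _ (fun x => ((x.1, x.2.1), x.2.2)) ?_ (fun ω => rfl)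
    exact Function.LeftInverse.injective
      (g := fun x => (x.1.1, (x.1.2, x.2))) (fun x => rfl)
  have h2 : ent μ (fun ω => ((A ω, B ω), (Y ω, C ω)))
      = ent μ (fun ω => (A ω, (Y ω, (B ω, C ω)))) := by
    refine ent_eq_of_comp_inj _ _
      (fun x => ((x.1, x.2.2.1), (x.2.1, x.2.2.2))) ?_ (fun ω => rfl)
    exact Function.LeftInverse.injective
      (g := fun x => (x.1.1, (x.2.1, (x.1.2, x.2.2)))) (fun x => rfl)
  have h3 : ent μ (fun ω => (B ω, (Y ω, C ω))) = ent μ (fun ω => (Y ω, (B ω, C ω))) := by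
    refine ent_eq_of_comp_inj _ _ (fun x => (x.2.1, (x.1, x.2.2))) ?_ (fun ω => rfl)
    exact Function.LeftInverse.injective
      (g := fun x => (x.2.1, (x.1, x.2.2))) (fun x => rfl)
  linarith

lemma condMutInfo_comp_left {α α' β γ : Type*} [Fintype α] [Fintype α'] [Fintype β]
    [Fintype γ] (A : Ω → α) (Y : Ω → β) (C : Ω → γ) (e : α → α')
    (he : Function.Injective e) :
    condMutInfo μ (fun ω => e (A ω)) Y C = condMutInfo μ A Y C := by
  rw [condMutInfo_eq, condMutInfo_eq]
  have h1 : ent μ (fun ω => (e (A ω), C ω)) = ent μ (fun ω => (A ω, C ω)) :=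
    ent_eq_of_comp_inj _ _ (Prod.map e id) (he.prodMap Function.injective_id)
      (fun ω => rfl)
  have h2 : ent μ (fun ω => (e (A ω), (Y ω, C ω)))
      = ent μ (fun ω => (A ω, (Y ω, C ω))) :=
    ent_eq_of_comp_inj _ _ (Prod.map e id) (he.prodMap Function.injective_id)
      (fun ω => rfl)
  linarith

lemma condMutInfo_comp_right {α β γ γ' : Type*} [Fintype α] [Fintype β] [Fintype γ]
    [Fintype γ'] (A : Ω → α) (Y : Ω → β) (C : Ω → γ) (e : γ → γ')
    (he : Function.Injective e) :
    condMutInfo μ A Y (fun ω => e (C ω)) = condMutInfo μ A Y C := by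
  rw [condMutInfo_eq, condMutInfo_eq]
  have hid : Function.Injective (id : β → β) := Function.injective_id
  have h1 : ent μ (fun ω => (A ω, e (C ω))) = ent μ (fun ω => (A ω, C ω)) :=
    ent_eq_of_comp_inj _ _ (Prod.map id e) (Function.injective_id.prodMap he)
      (fun ω => rfl)
  have h2 : ent μ (fun ω => (Y ω, e (C ω))) = ent μ (fun ω => (Y ω, C ω)) :=
    ent_eq_of_comp_inj _ _ (Prod.map id e) (Function.injective_id.prodMap he)
      (fun ω => rfl)
  have h3 : ent μ (fun ω => (A ω, (Y ω, e (C ω))))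
      = ent μ (fun ω => (A ω, (Y ω, C ω))) :=
    ent_eq_of_comp_inj _ _ (Prod.map id (Prod.map id e))
      (Function.injective_id.prodMap (Function.injective_id.prodMap he)) (fun ω => rfl)
  have h4 : ent μ (fun ω => e (C ω)) = ent μ C :=
    ent_eq_of_comp_inj _ _ e he (fun ω => rfl)
  linarith

lemma ent_pair_of_indep {α γ : Type*} [Fintype α] [Fintype γ] [MeasurableSpace α]
    [MeasurableSpace γ] [MeasurableSingletonClass α] [MeasurableSingletonClass γ]
    {A : Ω → α} {C : Ω → γ} (hA : Measurable A) (hC : Measurable C)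
    (hi : IndepFun A C μ) :
    ent μ (fun ω => (A ω, C ω)) = ent μ A + ent μ C := by
  have hfac : ∀ (a : α) (c : γ), (μ ((fun ω => (A ω, C ω)) ⁻¹' {(a, c)})).toReal
      = (μ (A ⁻¹' {a})).toReal * (μ (C ⁻¹' {c})).toReal := by
    intro a c
    have hpre : (fun ω => (A ω, C ω)) ⁻¹' {(a, c)} = A ⁻¹' {a} ∩ C ⁻¹' {c} := by
      ext ω; simp [Prod.ext_iff]
    rw [hpre, hi.measure_inter_preimage_eq_mul _ _ (measurableSet_singleton a)
      (measurableSet_singleton c), ENNReal.toReal_mul]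
  unfold ent
  rw [Fintype.sum_prod_type]
  have step : ∀ a : α, ∑ c : γ,
      Real.negMulLog ((μ ((fun ω => (A ω, C ω)) ⁻¹' {(a, c)})).toReal)
      = ∑ c : γ, ((μ (C ⁻¹' {c})).toReal * Real.negMulLog ((μ (A ⁻¹' {a})).toReal)
          + (μ (A ⁻¹' {a})).toReal * Real.negMulLog ((μ (C ⁻¹' {c})).toReal)) := by
    intro a
    refine Finset.sum_congr rfl fun c _ => ?_
    rw [hfac a c, Real.negMulLog_mul]
  rw [Finset.sum_congr rfl fun a _ => step a]
  simp only [Finset.sum_add_distrib]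
  have t1 : ∀ a : α, ∑ c : γ,
      (μ (C ⁻¹' {c})).toReal * Real.negMulLog ((μ (A ⁻¹' {a})).toReal)
      = Real.negMulLog ((μ (A ⁻¹' {a})).toReal) := by
    intro a
    rw [← Finset.sum_mul, sum_prob_eq_one hC, one_mul]
  have t2 : ∀ a : α, ∑ c : γ,
      (μ (A ⁻¹' {a})).toReal * Real.negMulLog ((μ (C ⁻¹' {c})).toReal)
      = (μ (A ⁻¹' {a})).toReal * ent μ C := by
    intro a
    rw [← Finset.mul_sum]; rfl
  rw [Finset.sum_congr rfl fun a _ => t1 a, Finset.sum_congr rfl fun a _ => t2 a,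
    ← Finset.sum_mul, sum_prob_eq_one hA, one_mul]
  rfl


section Family

variable {K : ℕ} {α : Fin K → Type u} {ζ : Type u}
  [∀ k, Fintype (α k)] [Fintype ζ]
  [mα : ∀ k, MeasurableSpace (α k)] [∀ k, MeasurableSingletonClass (α k)]
  [mζ : MeasurableSpace ζ] [MeasurableSingletonClass ζ]
  {β : Type*} [Fintype β] [MeasurableSpace β] [MeasurableSingletonClass β]
  {X : (k : Fin K) → Ω → α k} {Z : Ω → ζ} {Y : Ω → β}

/-- Split a joint value over `insert k T` into the `k`-component and the rest. -/
def splitInsert (k : Fin K) (T : Finset (Fin K))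
    (f : (j : (insert k T : Finset (Fin K))) → α j) : α k × ((j : T) → α j) :=
  (f ⟨k, Finset.mem_insert_self k T⟩, fun j => f ⟨j.1, Finset.mem_insert_of_mem j.2⟩)

lemma splitInsert_inj (k : Fin K) (T : Finset (Fin K)) :
    Function.Injective (splitInsert (α := α) k T) := by
  intro f g h
  rw [Prod.ext_iff] at h
  funext j
  rcases Finset.mem_insert.mp j.2 with hj | hj
  · have hjk : j = ⟨k, Finset.mem_insert_self k T⟩ := Subtype.ext hj
    rw [hjk]; exact h.1
  · exact congrFun h.2 ⟨j.1, hj⟩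

/-- Split a joint value over `T ∪ B` into the two groups. -/
def splitUnion (T B : Finset (Fin K))
    (f : (j : (T ∪ B : Finset (Fin K))) → α j) : ((j : T) → α j) × ((j : B) → α j) :=
  (fun j => f ⟨j.1, Finset.mem_union_left _ j.2⟩,
   fun j => f ⟨j.1, Finset.mem_union_right _ j.2⟩)

lemma splitUnion_inj (T B : Finset (Fin K)) :
    Function.Injective (splitUnion (α := α) T B) := by
  intro f g h
  rw [Prod.ext_iff] at h
  funext j
  rcases Finset.mem_union.mp j.2 with hj | hj
  · exact congrFun h.1 ⟨j.1, hj⟩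
  · exact congrFun h.2 ⟨j.1, hj⟩

lemma splitUnion_meas (T B : Finset (Fin K)) :
    Measurable (splitUnion (α := α) T B) :=
  Measurable.prodMk (measurable_pi_lambda _ fun j => measurable_pi_apply _)
    (measurable_pi_lambda _ fun j => measurable_pi_apply _)

lemma measurable_joint (hX : ∀ k, Measurable (X k)) (T : Finset (Fin K)) :
    Measurable (joint X T) :=
  measurable_pi_lambda _ fun j => hX j

/-- Entropy is unchanged by adjoining the (trivial) empty joint variable. -/
lemma ent_empty_pair {δ : Type*} [Fintype δ] (W : Ω → δ) :
    ent μ (fun ω => (joint X (∅ : Finset (Fin K)) ω, W ω)) = ent μ W := by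
  refine ent_eq_of_comp_inj _ _
    (fun w => ((fun j => absurd j.2 (Finset.notMem_empty j.1), w) :
      ((j : (∅ : Finset (Fin K))) → α j) × δ)) ?_ ?_
  · intro x y h
    exact congrArg Prod.snd h
  · intro ω
    have : joint X (∅ : Finset (Fin K)) ω
        = (fun j : ((∅ : Finset (Fin K)) : Finset (Fin K)) =>
            absurd j.2 (Finset.notMem_empty j.1)) := by
      funext j
      exact absurd j.2 (Finset.notMem_empty j.1)
    rw [this]

lemma cmi_joint_empty {γ : Type*} [Fintype γ] (C : Ω → γ) :
    condMutInfo μ (joint X (∅ : Finset (Fin K))) Y C = 0 := by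
  rw [condMutInfo_eq]
  have h1 := ent_empty_pair (μ := μ) (X := X) C
  have h2 := ent_empty_pair (μ := μ) (X := X) (fun ω => (Y ω, C ω))
  linarith

/-- Relabel the conditioning variable `(X_{T∪B}, Z)` as `(X_T, (X_B, Z))`. -/
lemma cmi_cond_union_split {δ : Type*} [Fintype δ] (A : Ω → δ) (T B : Finset (Fin K)) :
    condMutInfo μ A Y (fun ω => (joint X T ω, (joint X B ω, Z ω)))
      = condMutInfo μ A Y (fun ω => (joint X (T ∪ B) ω, Z ω)) := by
  refine condMutInfo_comp_right A Y (fun ω => (joint X (T ∪ B) ω, Z ω))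
    (fun x => ((splitUnion T B x.1).1, ((splitUnion T B x.1).2, x.2))) ?_
  intro x y hxy
  have hxy' : ((splitUnion T B x.1).1, ((splitUnion T B x.1).2, x.2))
      = ((splitUnion T B y.1).1, ((splitUnion T B y.1).2, y.2)) := hxy
  rw [Prod.mk.injEq, Prod.mk.injEq] at hxy'
  have h4 : splitUnion T B x.1 = splitUnion T B y.1 :=
    Prod.ext_iff.mpr ⟨hxy'.1, hxy'.2.1⟩
  exact Prod.ext_iff.mpr ⟨splitUnion_inj T B h4, hxy'.2.2⟩

/-- Independence of `X k` from `(X_B, Z)` for `k ∉ B`. -/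
lemma indep_single_joint (hX : ∀ k, Measurable (X k)) (hZ : Measurable Z)
    (hind : iIndepFun (m := extMeas mα mζ) (extFam X Z) μ)
    (k : Fin K) (B : Finset (Fin K)) (hk : k ∉ B) :
    IndepFun (X k) (fun ω => (joint X B ω, Z ω)) μ := by
  classical
  letI : ∀ j : Option (Fin K), MeasurableSpace (extType α ζ j) := extMeas mα mζ
  have hmeas : ∀ j, Measurable (extFam X Z j) := by
    rintro (_ | j)
    · exact hZ
    · exact hX j
  have hdisj : Disjoint ({some k} : Finset (Option (Fin K)))
      (insert none (B.image some)) := by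
    rw [Finset.disjoint_left]
    intro x hx hx'
    rw [Finset.mem_singleton] at hx
    subst hx
    rcases Finset.mem_insert.mp hx' with h | h
    · exact Option.some_ne_none k h
    · obtain ⟨j, hj, hjk⟩ := Finset.mem_image.mp h
      exact hk (Option.some.inj hjk ▸ hj)
  have h := hind.indepFun_finset {some k} (insert none (B.image some)) hdisj hmeas
  have hφ : Measurable
      (fun g : (j : ({some k} : Finset (Option (Fin K)))) → extType α ζ j =>
        g ⟨some k, Finset.mem_singleton_self _⟩) := measurable_pi_apply _
  have hψ : Measurable
      (fun g : (j : (insert none (B.image some) : Finset (Option (Fin K)))) →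
          extType α ζ j =>
        ((fun j : B => g ⟨some j.1,
            Finset.mem_insert_of_mem (Finset.mem_image_of_mem some j.2)⟩,
          g ⟨none, Finset.mem_insert_self _ _⟩) : ((j : B) → α j) × ζ)) :=
    Measurable.prodMk (measurable_pi_lambda _ fun j => measurable_pi_apply _)
      (measurable_pi_apply _)
  exact h.comp hφ hψ

/-- Vanishing of `I(X_k ; X_T | X_B, Z)` under mutual independence. -/
lemma cmi_vanish (hX : ∀ k, Measurable (X k)) (hZ : Measurable Z)
    (hind : iIndepFun (m := extMeas mα mζ) (extFam X Z) μ)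
    (k : Fin K) (T B : Finset (Fin K)) (hkT : k ∉ T) (hkB : k ∉ B)
    (hTB : Disjoint T B) :
    condMutInfo μ (X k) (joint X T) (fun ω => (joint X B ω, Z ω)) = 0 := by
  have i1 : IndepFun (X k) (fun ω => (joint X B ω, Z ω)) μ :=
    indep_single_joint hX hZ hind k B hkB
  have i2 : IndepFun (X k) (fun ω => (joint X T ω, (joint X B ω, Z ω))) μ := by
    have hkTB : k ∉ T ∪ B := by
      rw [Finset.mem_union]; exact fun h => h.elim hkT hkB
    have i0 : IndepFun (X k) (fun ω => (joint X (T ∪ B) ω, Z ω)) μ :=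
      indep_single_joint hX hZ hind k (T ∪ B) hkTB
    have hψ : Measurable (fun x : ((j : (T ∪ B : Finset (Fin K))) → α j) × ζ =>
        ((splitUnion T B x.1).1, ((splitUnion T B x.1).2, x.2))) := by
      have hs : Measurable (fun x : ((j : (T ∪ B : Finset (Fin K))) → α j) × ζ =>
          splitUnion T B x.1) := (splitUnion_meas T B).comp measurable_fst
      exact Measurable.prodMk hs.fst (Measurable.prodMk hs.snd measurable_snd)
    exact i0.comp measurable_id hψ
  rw [condMutInfo_eq]
  rw [ent_pair_of_indep (hX k) ((measurable_joint hX B).prodMk hZ) i1]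
  rw [ent_pair_of_indep (hX k)
    ((measurable_joint hX T).prodMk ((measurable_joint hX B).prodMk hZ)) i2]
  ring

/-- Monotonicity : adding independent variables to the conditioning increases CMI. -/
lemma cmi_mono_union (hX : ∀ k, Measurable (X k)) (hZ : Measurable Z)
    (hY : Measurable Y) (hind : iIndepFun (m := extMeas mα mζ) (extFam X Z) μ)
    (k : Fin K) (T B : Finset (Fin K)) (hkT : k ∉ T) (hkB : k ∉ B)
    (hTB : Disjoint T B) :
    condMutInfo μ (X k) Y (fun ω => (joint X B ω, Z ω))
      ≤ condMutInfo μ (X k) Y (fun ω => (joint X (T ∪ B) ω, Z ω)) := by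
  set C := fun ω => (joint X B ω, Z ω) with hC
  have hCm : Measurable C := (measurable_joint hX B).prodMk hZ
  have h0 : condMutInfo μ (fun ω => (Y ω, joint X T ω)) (X k) C
      = condMutInfo μ (joint X T) (X k) C
        + condMutInfo μ Y (X k) (fun ω => (joint X T ω, C ω)) :=
    condMutInfo_chain Y (joint X T) (X k) C
  have h1 : condMutInfo μ (fun ω => (joint X T ω, Y ω)) (X k) C
      = condMutInfo μ Y (X k) C
        + condMutInfo μ (joint X T) (X k) (fun ω => (Y ω, C ω)) :=
    condMutInfo_chain (joint X T) Y (X k) C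
  have hswap : condMutInfo μ (fun ω => (Y ω, joint X T ω)) (X k) C
      = condMutInfo μ (fun ω => (joint X T ω, Y ω)) (X k) C :=
    condMutInfo_comp_left (fun ω => (joint X T ω, Y ω)) (X k) C Prod.swap
      Prod.swap_injective
  have hvan : condMutInfo μ (joint X T) (X k) C = 0 := by
    rw [condMutInfo_comm]
    exact cmi_vanish hX hZ hind k T B hkT hkB hTB
  have hpos : 0 ≤ condMutInfo μ (joint X T) (X k) (fun ω => (Y ω, C ω)) :=
    condMutInfo_nonneg (measurable_joint hX T) (hX k) (hY.prodMk hCm)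
  have key : condMutInfo μ Y (X k) C
      ≤ condMutInfo μ Y (X k) (fun ω => (joint X T ω, C ω)) := by linarith
  have e1 : condMutInfo μ (X k) Y C = condMutInfo μ Y (X k) C :=
    condMutInfo_comm (X k) Y C
  have e2 : condMutInfo μ (X k) Y (fun ω => (joint X (T ∪ B) ω, Z ω))
      = condMutInfo μ Y (X k) (fun ω => (joint X T ω, C ω)) := by
    rw [← cmi_cond_union_split (X k) T B]
    exact condMutInfo_comm (X k) Y _
  linarith

/-- Monotonicity in the conditioning set. -/
lemma cmi_mono (hX : ∀ k, Measurable (X k)) (hZ : Measurable Z)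
    (hY : Measurable Y) (hind : iIndepFun (m := extMeas mα mζ) (extFam X Z) μ)
    (k : Fin K) (B B' : Finset (Fin K)) (hBB' : B ⊆ B') (hk : k ∉ B') :
    condMutInfo μ (X k) Y (fun ω => (joint X B ω, Z ω))
      ≤ condMutInfo μ (X k) Y (fun ω => (joint X B' ω, Z ω)) := by
  have h := cmi_mono_union hX hZ hY hind k (B' \ B) B
    (fun hc => hk (Finset.mem_sdiff.mp hc).1) (fun hc => hk (hBB' hc))
    Finset.sdiff_disjoint
  rwa [Finset.sdiff_union_of_subset hBB'] at h

/-- Superadditivity of CMI for independent variables. -/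
lemma claim1 (hX : ∀ k, Measurable (X k)) (hZ : Measurable Z)
    (hY : Measurable Y) (hind : iIndepFun (m := extMeas mα mζ) (extFam X Z) μ)
    (B : Finset (Fin K)) (T : Finset (Fin K)) (hTB : Disjoint T B) :
    ∑ i ∈ T, condMutInfo μ (X i) Y (fun ω => (joint X B ω, Z ω))
      ≤ condMutInfo μ (joint X T) Y (fun ω => (joint X B ω, Z ω)) := by
  classical
  induction T using Finset.induction_on with
  | empty =>
    rw [Finset.sum_empty, cmi_joint_empty]
  | @insert k T hkT ih =>
    have hkB : k ∉ B := (Finset.disjoint_insert_left.mp hTB).1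
    have hTB' : Disjoint T B := (Finset.disjoint_insert_left.mp hTB).2
    set C := fun ω => (joint X B ω, Z ω) with hC
    have hsplit : condMutInfo μ (fun ω => (X k ω, joint X T ω)) Y C
        = condMutInfo μ (joint X (insert k T)) Y C :=
      condMutInfo_comp_left (joint X (insert k T)) Y C (splitInsert k T)
        (splitInsert_inj k T)
    have hchain : condMutInfo μ (fun ω => (X k ω, joint X T ω)) Y C
        = condMutInfo μ (joint X T) Y C
          + condMutInfo μ (X k) Y (fun ω => (joint X T ω, C ω)) :=
      condMutInfo_chain (X k) (joint X T) Y C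
    have hmono : condMutInfo μ (X k) Y C
        ≤ condMutInfo μ (X k) Y (fun ω => (joint X T ω, C ω)) := by
      have h := cmi_mono_union hX hZ hY hind k T B hkT hkB hTB'
      rw [← cmi_cond_union_split (X k) T B] at h
      exact h
    rw [Finset.sum_insert hkT]
    have := ih hTB'
    linarith

end Family

end Stmt5Aux

open Stmt5Aux in
/-- Appendix D, Lemma 4. Let `X_1, …, X_K, Z` be finitely-valued random
variables with `{X_1, …, X_K, Z}` mutually independent, and `Y` a further finitely-valued
random variable. Under the symmetry condition
`I(X_k ; Y | X_L, Z) = I(X_i ; Y | X_L, Z)` for all `k ≠ i` and `L ⊆ {1,…,K} \ {k,i}`,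
for every `S` with `0 < |S| < K` (writing `Sᶜ = {1,…,K} \ S`):
`(1/|Sᶜ|) · I(X_{Sᶜ} ; Y | Z) ≤ (1/|S|) · I(X_S ; Y | X_{Sᶜ}, Z)`. -/
theorem stmt5 {Ω : Type*} [MeasurableSpace Ω] (μ : Measure Ω) [IsProbabilityMeasure μ]
    {K : ℕ} {α : Fin K → Type u} {ζ : Type u}
    [∀ k, Fintype (α k)] [Fintype ζ]
    [mα : ∀ k, MeasurableSpace (α k)] [∀ k, MeasurableSingletonClass (α k)]
    [mζ : MeasurableSpace ζ] [MeasurableSingletonClass ζ]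
    {β : Type*} [Fintype β] [MeasurableSpace β] [MeasurableSingletonClass β]
    (X : (k : Fin K) → Ω → α k) (Z : Ω → ζ) (Y : Ω → β)
    (hX : ∀ k, Measurable (X k)) (hZ : Measurable Z) (hY : Measurable Y)
    (hind : iIndepFun (m := extMeas mα mζ) (extFam X Z) μ)
    (hsym : ∀ k i : Fin K, k ≠ i → ∀ L : Finset (Fin K), L ⊆ Finset.univ \ {k, i} →
      condMutInfo μ (X k) Y (fun ω => (joint X L ω, Z ω)) =
        condMutInfo μ (X i) Y (fun ω => (joint X L ω, Z ω)))
    (S : Finset (Fin K)) (hS : 0 < S.card) (hSK : S.card < K) :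
    (1 / ((Sᶜ : Finset (Fin K)).card : ℝ)) * condMutInfo μ (joint X Sᶜ) Y Z ≤
      (1 / (S.card : ℝ)) *
        condMutInfo μ (joint X S) Y (fun ω => (joint X Sᶜ ω, Z ω)) := by
  classical
  obtain ⟨i₀, hi₀⟩ := Finset.card_pos.mp hS
  have hScne : (Sᶜ : Finset (Fin K)).card = K - S.card := by
    rw [Finset.card_compl, Fintype.card_fin]
  set c := condMutInfo μ (X i₀) Y (fun ω => (joint X Sᶜ ω, Z ω)) with hc
  have hsame : ∀ i ∈ S, condMutInfo μ (X i) Y (fun ω => (joint X Sᶜ ω, Z ω)) = c := by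
    intro i hi
    by_cases h : i = i₀
    · rw [h]
    · refine hsym i i₀ h Sᶜ ?_
      intro j hj
      rw [Finset.mem_sdiff]
      refine ⟨Finset.mem_univ _, ?_⟩
      rw [Finset.mem_insert, Finset.mem_singleton]
      push_neg
      have hjS : j ∉ S := Finset.mem_compl.mp hj
      exact ⟨fun hji => hjS (hji ▸ hi), fun hji => hjS (hji ▸ hi₀)⟩
  have h1 : (S.card : ℝ) * c
      ≤ condMutInfo μ (joint X S) Y (fun ω => (joint X Sᶜ ω, Z ω)) := by
    have hcl := claim1 (μ := μ) hX hZ hY hind Sᶜ S disjoint_compl_right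
    rw [Finset.sum_congr rfl hsame, Finset.sum_const, nsmul_eq_mul] at hcl
    exact hcl
  have h2 : ∀ B : Finset (Fin K), B ⊆ Sᶜ →
      condMutInfo μ (joint X B) Y Z ≤ (B.card : ℝ) * c := by
    intro B
    induction B using Finset.induction_on with
    | empty =>
      intro _
      rw [cmi_joint_empty]
      simp
    | @insert k B hkB ih =>
      intro hsub
      have hkSc : k ∈ Sᶜ := hsub (Finset.mem_insert_self k B)
      have hkS : k ∉ S := Finset.mem_compl.mp hkSc
      have hBSc : B ⊆ Sᶜ := fun j hj => hsub (Finset.mem_insert_of_mem hj)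
      have hsplit : condMutInfo μ (fun ω => (X k ω, joint X B ω)) Y Z
          = condMutInfo μ (joint X (insert k B)) Y Z :=
        condMutInfo_comp_left (joint X (insert k B)) Y Z
          (splitInsert k B) (splitInsert_inj k B)
      have hchain := condMutInfo_chain (μ := μ) (X k) (joint X B) Y Z
      have hstep : condMutInfo μ (X k) Y (fun ω => (joint X B ω, Z ω)) ≤ c := by
        have s1 : condMutInfo μ (X k) Y (fun ω => (joint X B ω, Z ω))
            ≤ condMutInfo μ (X k) Y (fun ω => (joint X (Sᶜ \ {k}) ω, Z ω)) := by
          refine cmi_mono hX hZ hY hind k B (Sᶜ \ {k}) ?_ ?_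
          · intro j hj
            rw [Finset.mem_sdiff, Finset.mem_singleton]
            exact ⟨hBSc hj, fun hjk => hkB (hjk ▸ hj)⟩
          · intro hcon
            exact (Finset.mem_sdiff.mp hcon).2 (Finset.mem_singleton_self k)
        have s2 : condMutInfo μ (X k) Y (fun ω => (joint X (Sᶜ \ {k}) ω, Z ω))
            = condMutInfo μ (X i₀) Y (fun ω => (joint X (Sᶜ \ {k}) ω, Z ω)) := by
          refine hsym k i₀ (fun h => hkS (h ▸ hi₀)) (Sᶜ \ {k}) ?_
          intro j hj
          rw [Finset.mem_sdiff] at hj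
          rw [Finset.mem_sdiff]
          refine ⟨Finset.mem_univ _, ?_⟩
          rw [Finset.mem_insert, Finset.mem_singleton]
          push_neg
          have hjS : j ∉ S := Finset.mem_compl.mp hj.1
          exact ⟨fun h => hj.2 (Finset.mem_singleton.mpr h),
            fun h => hjS (h ▸ hi₀)⟩
        have s3 : condMutInfo μ (X i₀) Y (fun ω => (joint X (Sᶜ \ {k}) ω, Z ω))
            ≤ condMutInfo μ (X i₀) Y (fun ω => (joint X Sᶜ ω, Z ω)) :=
          cmi_mono hX hZ hY hind i₀ (Sᶜ \ {k}) Sᶜ Finset.sdiff_subset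
            (fun h => (Finset.mem_compl.mp h) hi₀)
        rw [hc]
        linarith
      have hcard : (((insert k B : Finset (Fin K)).card : ℝ)) = (B.card : ℝ) + 1 := by
        rw [Finset.card_insert_of_notMem hkB]
        push_cast
        ring
      have hih := ih hBSc
      rw [← hsplit, hchain, hcard]
      linarith
  have hm : (0:ℝ) < ((Sᶜ : Finset (Fin K)).card : ℝ) := by
    have : 0 < (Sᶜ : Finset (Fin K)).card := by rw [hScne]; omega
    exact_mod_cast this
  have hn : (0:ℝ) < (S.card : ℝ) := by exact_mod_cast hS
  have hL : condMutInfo μ (joint X Sᶜ) Y Z ≤ ((Sᶜ : Finset (Fin K)).card : ℝ) * c :=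
    h2 Sᶜ (subset_refl _)
  calc (1 / ((Sᶜ : Finset (Fin K)).card : ℝ)) * condMutInfo μ (joint X Sᶜ) Y Z
      ≤ (1 / ((Sᶜ : Finset (Fin K)).card : ℝ))
          * (((Sᶜ : Finset (Fin K)).card : ℝ) * c) :=
        mul_le_mul_of_nonneg_left hL (by positivity)
    _ = c := by field_simp
    _ = (1 / (S.card : ℝ)) * ((S.card : ℝ) * c) := by field_simp
    _ ≤ (1 / (S.card : ℝ)) *
          condMutInfo μ (joint X S) Y (fun ω => (joint X Sᶜ ω, Z ω)) :=
        mul_le_mul_of_nonneg_left h1 (by positivity)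
end
end
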